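/- Let (P, σ, τ) be a perfume, let m := ord_P(σ) and L := 2m, and let 1 ≤ J, K ≤ m. Define c_{j,l} := σ^{l−j} for 0 ≤ l < m and c_{j,l} := τ·σ^{l−j} for m ≤ l < L (0 ≤ j < J), and d_{k,l} := −τ·σ^{k−l} for 0 ≤ l < m and d_{k,l} := −σ^{k−l} for m ≤ l < L (0 ≤ k < K), all in ZMod P with negative exponents meaning powers of σ^{−1}. Then for all 0 ≤ a < b < J, the difference vector c_a − c_b = (c_{a,0} − c_{b,0}, …, c_{a,L−1} − c_{b,L−1}) in (ZMod P)^L is multiplicity free, and likewise for all 0 ≤ a < b < K the vector d_a − d_b is multiplicity free. -/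

import Mathlib

/-- The multiplicative order `ord_P(σ)` of `σ` modulo `P`. -/
noncomputable def ordP (P σ : ℕ) : ℕ := orderOf ((σ : ZMod P))

/-- `σ` is a fulfillment to `P`. -/
def IsFulfillment (P σ : ℕ) : Prop :=
  Nat.Coprime σ P ∧ ∀ i : ℕ, 1 ≤ i → i < ordP P σ → Nat.Coprime (σ ^ i - 1) P

/-- A triple `(P, σ, τ)` of positive integers is a perfume. -/
def IsPerfume (P σ τ : ℕ) : Prop :=
  0 < P ∧ 0 < σ ∧ 0 < τ ∧ IsFulfillment P σ ∧ Nat.Coprime τ P ∧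
    ∀ i : ℕ, 1 ≤ i → i ≤ ordP P σ → (τ : ZMod P) ≠ (σ : ZMod P) ^ i

/-- A vector is multiplicity free if all its entries are pairwise distinct. -/
def MultFree {P L : ℕ} (v : Fin L → ZMod P) : Prop :=
  Function.Injective v

lemma pow_inj_aux {M : Type*} [Monoid M] {s : M} {m : ℕ}
    (hs : IsUnit s) (hmin : ∀ k, 0 < k → k < m → s ^ k ≠ 1) :
    ∀ i < m, ∀ j < m, s ^ i = s ^ j → i = j := by
  have key : ∀ i j, i ≤ j → j < m → s ^ i = s ^ j → i = j := by
    intro i j hij hj he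
    by_contra hne
    have h1 : s ^ i * s ^ (j - i) = s ^ i * 1 := by
      rw [mul_one, ← pow_add, show i + (j - i) = j by omega, ← he]
    have h2 := (hs.pow i).mul_left_cancel h1
    exact hmin (j - i) (by omega) (by omega) h2
  intro i hi j hj he
  rcases le_total i j with hle | hle
  · exact key i j hle hj he
  · exact (key j i hle hi he.symm).symm

lemma mix_aux {M : Type*} [CommMonoid M] {s t : M} {m : ℕ} (hm : 0 < m) (hsm : s ^ m = 1)
    (htp : ∀ n, t ≠ s ^ n) : ∀ n n', (1 : M) * s ^ n ≠ t * s ^ n' := by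
  intro n n' he
  apply htp (n + n' * (m - 1))
  have hadd : n' + n' * (m - 1) = n' * m := by
    cases m with
    | zero => omega
    | succ k => simp [Nat.mul_succ]; ring
  have h1 : s ^ (n' * m) = 1 := by rw [mul_comm n' m, pow_mul, hsm, one_pow]
  calc t = t * s ^ n' * s ^ (n' * (m - 1)) := by
        rw [mul_assoc, ← pow_add, hadd, h1, mul_one]
    _ = s ^ n * s ^ (n' * (m - 1)) := by rw [← he, one_mul]
    _ = s ^ (n + n' * (m - 1)) := by rw [pow_add]

lemma key_inj {P : ℕ} {s δ c₀ c₁ : ZMod P} {m : ℕ}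
    (hδ : IsUnit δ) (hc₀ : IsUnit c₀) (hc₁ : IsUnit c₁)
    (hsm : s ^ m = 1)
    (hinj : ∀ i < m, ∀ j < m, s ^ i = s ^ j → i = j)
    (hmix : ∀ n n', c₀ * s ^ n ≠ c₁ * s ^ n') :
    Function.Injective (fun l : Fin (2 * m) =>
      (if (l : ℕ) < m then c₀ else c₁) * s ^ (l : ℕ) * δ) := by
  intro l l' he
  simp only at he
  have he2 : (if (l : ℕ) < m then c₀ else c₁) * s ^ (l : ℕ)
      = (if (l' : ℕ) < m then c₀ else c₁) * s ^ (l' : ℕ) := hδ.mul_right_cancel he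
  have hl2 := l.2; have hl'2 := l'.2
  apply Fin.ext
  split_ifs at he2 with h1 h2 h2
  · exact hinj _ h1 _ h2 (hc₀.mul_left_cancel he2)
  · exact absurd he2 (hmix _ _)
  · exact absurd he2.symm (hmix _ _)
  · have e1 : s ^ (l : ℕ) = s ^ ((l : ℕ) - m) := by
      conv_lhs => rw [show (l : ℕ) = m + ((l : ℕ) - m) by omega]
      rw [pow_add, hsm, one_mul]
    have e2 : s ^ (l' : ℕ) = s ^ ((l' : ℕ) - m) := by
      conv_lhs => rw [show (l' : ℕ) = m + ((l' : ℕ) - m) by omega]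
      rw [pow_add, hsm, one_mul]
    rw [e1, e2] at he2
    have h3 := hinj _ (by omega) _ (by omega) (hc₁.mul_left_cancel he2)
    omega

lemma main_aux {P : ℕ} {s u t : ZMod P} {m J K : ℕ} (hm : 0 < m)
    (hJm : J ≤ m) (hKm : K ≤ m)
    (hs : IsUnit s) (ht : IsUnit t) (hsu1 : s * u = 1)
    (hsm : s ^ m = 1) (hmin : ∀ k, 0 < k → k < m → s ^ k ≠ 1)
    (htp : ∀ n, t ≠ s ^ n)
    (hunit_sub : ∀ i, 0 < i → i < m → IsUnit (s ^ i - 1))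
    (c : Fin J → Fin (2 * m) → ZMod P) (d : Fin K → Fin (2 * m) → ZMod P)
    (hc : ∀ j l, c j l = if (l : ℕ) < m then s ^ (l : ℕ) * u ^ (j : ℕ)
        else t * (s ^ (l : ℕ) * u ^ (j : ℕ)))
    (hd : ∀ k l, d k l = if (l : ℕ) < m then -(t * (s ^ (k : ℕ) * u ^ (l : ℕ)))
        else -(s ^ (k : ℕ) * u ^ (l : ℕ))) :
    (∀ a b : Fin J, a < b → Function.Injective (fun l => c a l - c b l)) ∧
    (∀ a b : Fin K, a < b → Function.Injective (fun l => d a l - d b l)) := by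
  have hinj := pow_inj_aux hs hmin
  have hu : IsUnit u := IsUnit.of_mul_eq_one (a := u) s (by rw [mul_comm]; exact hsu1)
  have hue : u = s ^ (m - 1) := by
    have h1 : s * s ^ (m - 1) = 1 := by
      rw [← pow_succ', show m - 1 + 1 = m by omega, hsm]
    exact hs.mul_left_cancel (hsu1.trans h1.symm)
  have hum : u ^ m = 1 := by
    rw [hue, ← pow_mul, mul_comm, pow_mul, hsm, one_pow]
  have humin : ∀ k, 0 < k → k < m → u ^ k ≠ 1 := by
    intro k hk hkm h1
    apply hmin k hk hkm
    have h2 : s ^ k * u ^ k = 1 := by rw [← mul_pow, hsu1, one_pow]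
    rwa [h1, mul_one] at h2
  have huinj := pow_inj_aux hu humin
  have hutp : ∀ n, t ≠ u ^ n := by
    intro n; rw [hue, ← pow_mul]; exact htp _
  have hsupow : ∀ i : ℕ, u ^ i * s ^ i = 1 := by
    intro i; rw [← mul_pow, mul_comm, hsu1, one_pow]
  constructor
  · intro a b hab
    have hδc : IsUnit (u ^ (a : ℕ) - u ^ (b : ℕ)) := by
      have h2 : u ^ (b : ℕ) * s ^ ((b : ℕ) - (a : ℕ)) = u ^ (a : ℕ) := by
        calc u ^ (b : ℕ) * s ^ ((b : ℕ) - (a : ℕ))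
            = u ^ (a : ℕ) * (u ^ ((b : ℕ) - (a : ℕ)) * s ^ ((b : ℕ) - (a : ℕ))) := by
              rw [← mul_assoc, ← pow_add]; congr 2; omega
          _ = u ^ (a : ℕ) := by rw [hsupow, mul_one]
      have h1 : u ^ (b : ℕ) * (s ^ ((b : ℕ) - (a : ℕ)) - 1)
          = u ^ (a : ℕ) - u ^ (b : ℕ) := by rw [mul_sub, mul_one, h2]
      rw [← h1]
      have hb := b.2
      exact (hu.pow _).mul (hunit_sub _ (by exact_mod_cast Nat.sub_pos_of_lt hab) (by omega))
    have hfun : (fun l : Fin (2 * m) => c a l - c b l)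
        = fun l : Fin (2 * m) => (if (l : ℕ) < m then 1 else t) * s ^ (l : ℕ)
            * (u ^ (a : ℕ) - u ^ (b : ℕ)) := by
      funext l
      rw [hc, hc]
      split_ifs <;> ring
    rw [hfun]
    exact key_inj hδc isUnit_one ht hsm hinj (mix_aux hm hsm htp)
  · intro a b hab
    have hδd : IsUnit (s ^ (b : ℕ) - s ^ (a : ℕ)) := by
      have h2 : s ^ (a : ℕ) * (s ^ ((b : ℕ) - (a : ℕ)) - 1)
          = s ^ (b : ℕ) - s ^ (a : ℕ) := by
        rw [mul_sub, mul_one, ← pow_add]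
        congr 2
        omega
      rw [← h2]
      have hb := b.2
      exact (hs.pow _).mul (hunit_sub _ (by exact_mod_cast Nat.sub_pos_of_lt hab) (by omega))
    have hfun : (fun l : Fin (2 * m) => d a l - d b l)
        = fun l : Fin (2 * m) => (if (l : ℕ) < m then t else 1) * u ^ (l : ℕ)
            * (s ^ (b : ℕ) - s ^ (a : ℕ)) := by
      funext l
      rw [hd, hd]
      split_ifs <;> ring
    rw [hfun]
    exact key_inj hδd ht isUnit_one hum huinj
      (fun n n' he => mix_aux hm hum hutp n' n he.symm)

/-- for a perfume `(P, σ, τ)` with `m = ord_P(σ)`, `L = 2m`, and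
the model matrices defined by `c_{j,l} = σ^{l−j}` (resp. `τ·σ^{l−j}`) for
`l < m` (resp. `m ≤ l < L`) and `d_{k,l} = −τ·σ^{k−l}` (resp. `−σ^{k−l}`) for
`l < m` (resp. `m ≤ l < L`), every difference vector of two distinct rows
within each model matrix is multiplicity free. -/
theorem perfume_rows_multiplicity_free (P σ τ : ℕ) (h : IsPerfume P σ τ)
    (J K : ℕ) (hJ : 1 ≤ J) (hJm : J ≤ ordP P σ) (hK : 1 ≤ K) (hKm : K ≤ ordP P σ)
    (c : Fin J → Fin (2 * ordP P σ) → ZMod P)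
    (d : Fin K → Fin (2 * ordP P σ) → ZMod P)
    (hc : ∀ j l, c j l =
      if (l : ℕ) < ordP P σ then
        (σ : ZMod P) ^ (l : ℕ) * ((σ : ZMod P)⁻¹) ^ (j : ℕ)
      else
        (τ : ZMod P) * ((σ : ZMod P) ^ (l : ℕ) * ((σ : ZMod P)⁻¹) ^ (j : ℕ)))
    (hd : ∀ k l, d k l =
      if (l : ℕ) < ordP P σ then
        -((τ : ZMod P) * ((σ : ZMod P) ^ (k : ℕ) * ((σ : ZMod P)⁻¹) ^ (l : ℕ)))
      else
        -((σ : ZMod P) ^ (k : ℕ) * ((σ : ZMod P)⁻¹) ^ (l : ℕ))) :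
    (∀ a b : Fin J, a < b → MultFree (fun l => c a l - c b l)) ∧
    (∀ a b : Fin K, a < b → MultFree (fun l => d a l - d b l)) := by
  obtain ⟨hP, hσ, hτ, ⟨hσco, hful⟩, hτco, hτpow⟩ := h
  haveI : NeZero P := ⟨hP.ne'⟩
  have hs : IsUnit ((σ : ℕ) : ZMod P) := (ZMod.isUnit_iff_coprime σ P).mpr hσco
  have hτu : IsUnit ((τ : ℕ) : ZMod P) := (ZMod.isUnit_iff_coprime τ P).mpr hτco
  have hordm : orderOf ((σ : ℕ) : ZMod P) = ordP P σ := rfl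
  have hm : 0 < ordP P σ := by
    rw [← hordm, ← hs.unit_spec, orderOf_units]
    exact orderOf_pos _
  have hsm : ((σ : ℕ) : ZMod P) ^ ordP P σ = 1 := by
    rw [← hordm]; exact pow_orderOf_eq_one _
  have hmin : ∀ k, 0 < k → k < ordP P σ → ((σ : ℕ) : ZMod P) ^ k ≠ 1 := fun k hk hkm =>
    pow_ne_one_of_lt_orderOf (by omega) (by rw [hordm]; omega)
  have htp : ∀ n, ((τ : ℕ) : ZMod P) ≠ ((σ : ℕ) : ZMod P) ^ n := by
    intro n
    have hdiv : ((σ : ℕ) : ZMod P) ^ n = ((σ : ℕ) : ZMod P) ^ (n % ordP P σ) := by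
      conv_lhs => rw [show n = ordP P σ * (n / ordP P σ) + n % ordP P σ from
        (Nat.div_add_mod n (ordP P σ)).symm]
      rw [pow_add, pow_mul, hsm, one_pow, one_mul]
    rcases Nat.eq_zero_or_pos (n % ordP P σ) with h0 | h0
    · rw [hdiv, h0, pow_zero, ← hsm]
      exact hτpow _ hm le_rfl
    · rw [hdiv]
      exact hτpow _ h0 (le_of_lt (Nat.mod_lt _ hm))
  have hunit_sub : ∀ i, 0 < i → i < ordP P σ → IsUnit (((σ : ℕ) : ZMod P) ^ i - 1) := by
    intro i hi him
    have h1 : 1 ≤ σ ^ i := Nat.one_le_pow _ _ hσ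
    have hcast : ((σ ^ i - 1 : ℕ) : ZMod P) = ((σ : ℕ) : ZMod P) ^ i - 1 := by
      rw [Nat.cast_sub h1, Nat.cast_pow, Nat.cast_one]
    rw [← hcast]
    exact (ZMod.isUnit_iff_coprime _ P).mpr (hful i hi him)
  have hsu1 : ((σ : ℕ) : ZMod P) * ((σ : ℕ) : ZMod P)⁻¹ = 1 := ZMod.mul_inv_of_unit _ hs
  exact main_aux hm hJm hKm hs hτu hsu1 hsm hmin htp hunit_sub c d hc hd
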